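/- Let X be a nonempty bounded complete p-uniformly convex metric space with parameter k > 0 and set C = (1 + 2^(p−3)·k/(2^(p−1) − 1))^(1/p). Then every uniformly L-lipschitzian mapping T : X → X with L < C has a fixed point. -/

import Mathlib

open Filter Topology

namespace FPUL

lemma bdd {u : ℕ → ℝ} {M : ℝ} (h : ∀ n, u n ≤ M) :
    IsBoundedUnder (· ≤ ·) atTop u := isBoundedUnder_of ⟨M, h⟩

lemma cobdd {u : ℕ → ℝ} (h : ∀ n, 0 ≤ u n) :
    IsCoboundedUnder (· ≤ ·) atTop u :=
  Filter.IsBoundedUnder.isCoboundedUnder_le (isBoundedUnder_of ⟨0, h⟩)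

lemma ls_le {u : ℕ → ℝ} {b : ℝ} (h0 : ∀ n, 0 ≤ u n)
    (h : ∀ᶠ n in atTop, u n ≤ b) : limsup u atTop ≤ b :=
  limsup_le_of_le (cobdd h0) h

lemma ls_nonneg {u : ℕ → ℝ} {M : ℝ} (h0 : ∀ n, 0 ≤ u n) (hM : ∀ n, u n ≤ M) :
    0 ≤ limsup u atTop :=
  le_limsup_of_frequently_le (Frequently.of_forall h0) (bdd hM)

lemma ls_lt_eventually {u : ℕ → ℝ} {M b : ℝ} (hM : ∀ n, u n ≤ M)
    (h : limsup u atTop < b) : ∀ᶠ n in atTop, u n < b :=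
  eventually_lt_of_limsup_lt h (bdd hM)

lemma ls_combo {u v w : ℕ → ℝ} {Mv Mw a b c : ℝ} (ha : 0 ≤ a) (hb : 0 ≤ b)
    (h0u : ∀ n, 0 ≤ u n) (hMv : ∀ n, v n ≤ Mv) (hMw : ∀ n, w n ≤ Mw)
    (h : ∀ᶠ n in atTop, u n ≤ a * v n + b * w n + c) :
    limsup u atTop ≤ a * limsup v atTop + b * limsup w atTop + c := by
  refine le_of_forall_pos_le_add fun ε hε => ?_
  set ε' := ε / (a + b + 1) with hε'def
  have hε' : 0 < ε' := div_pos hε (by linarith)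
  have hv := ls_lt_eventually hMv (lt_add_of_pos_right _ hε' : limsup v atTop < limsup v atTop + ε')
  have hw := ls_lt_eventually hMw (lt_add_of_pos_right _ hε' : limsup w atTop < limsup w atTop + ε')
  have hev : ∀ᶠ n in atTop, u n ≤ a * (limsup v atTop + ε') + b * (limsup w atTop + ε') + c := by
    filter_upwards [h, hv, hw] with n h1 h2 h3
    have := mul_le_mul_of_nonneg_left h2.le ha
    have := mul_le_mul_of_nonneg_left h3.le hb
    linarith
  have hle := ls_le h0u hev
  have hab : (a + b) * ε' ≤ ε := by
    have h1 : (a + b) * ε' ≤ (a + b + 1) * ε' := mul_le_mul_of_nonneg_right (by linarith) hε'.le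
    have h2 : (a + b + 1) * ε' = ε := by
      rw [hε'def]; field_simp
    linarith
  nlinarith [hle]

lemma ls_add {u v : ℕ → ℝ} {Mv c : ℝ} (h0u : ∀ n, 0 ≤ u n) (hMv : ∀ n, v n ≤ Mv)
    (h : ∀ᶠ n in atTop, u n ≤ v n + c) : limsup u atTop ≤ limsup v atTop + c := by
  refine le_of_forall_pos_le_add fun ε hε => ?_
  have hv := ls_lt_eventually hMv (lt_add_of_pos_right _ hε : limsup v atTop < limsup v atTop + ε)
  have hev : ∀ᶠ n in atTop, u n ≤ limsup v atTop + c + ε := by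
    filter_upwards [h, hv] with n h1 h2; linarith
  exact ls_le h0u hev

lemma rpow_le_rpow_rev {x y p : ℝ} (hx : 0 ≤ x) (hy : 0 ≤ y) (hp : 0 < p)
    (h : x ^ p ≤ y ^ p) : x ≤ y := by
  by_contra hc; push_neg at hc
  exact absurd h (not_le.2 (Real.rpow_lt_rpow hy hc hp))

lemma ls_rpow {u : ℕ → ℝ} {M p : ℝ} (hp : 0 < p) (h0 : ∀ n, 0 ≤ u n) (hM : ∀ n, u n ≤ M) :
    limsup (fun n => u n ^ p) atTop = (limsup u atTop) ^ p := by
  set l := limsup u atTop with hl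
  have hl0 : 0 ≤ l := ls_nonneg h0 hM
  have h0p : ∀ n, 0 ≤ u n ^ p := fun n => Real.rpow_nonneg (h0 n) p
  have hMp : ∀ n, u n ^ p ≤ (max M 0) ^ p := fun n =>
    Real.rpow_le_rpow (h0 n) ((hM n).trans (le_max_left _ _)) hp.le
  set c := limsup (fun n => u n ^ p) atTop with hc
  have hc0 : 0 ≤ c := ls_nonneg h0p hMp
  have hbp : (c ^ (1/p)) ^ p = c := by
    rw [← Real.rpow_mul hc0, one_div, inv_mul_cancel₀ hp.ne', Real.rpow_one]
  apply le_antisymm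
  · by_contra hlt; push_neg at hlt
    have hlb : l < c ^ (1/p) := by
      by_contra hge; push_neg at hge
      have h2 := Real.rpow_le_rpow (Real.rpow_nonneg hc0 _) hge hp.le
      rw [hbp] at h2; exact absurd hlt (not_lt.2 h2)
    obtain ⟨b', hb1, hb2⟩ := exists_between hlb
    have h3 : c ≤ b' ^ p := ls_le h0p ((ls_lt_eventually hM hb1).mono
      fun n hn => Real.rpow_le_rpow (h0 n) hn.le hp.le)
    have h4 : b' ^ p < c := by
      rw [← hbp]; exact Real.rpow_lt_rpow (hl0.trans hb1.le) hb2 hp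
    linarith
  · by_contra hlt; push_neg at hlt
    have hbl : c ^ (1/p) < l := by
      by_contra hge; push_neg at hge
      have h2 := Real.rpow_le_rpow hl0 hge hp.le
      rw [hbp] at h2; exact absurd hlt (not_lt.2 h2)
    obtain ⟨b', hb1, hb2⟩ := exists_between hbl
    have hb'0 : 0 ≤ b' := le_trans (Real.rpow_nonneg hc0 _) hb1.le
    have hfreq : ∃ᶠ n in atTop, b' < u n := frequently_lt_of_lt_limsup (cobdd h0) hb2
    have h3 : b' ^ p ≤ c := le_limsup_of_frequently_le
      (hfreq.mono fun n hn => Real.rpow_le_rpow hb'0 hn.le hp.le) (bdd hMp)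
    have h4 : c < b' ^ p := by
      rw [← hbp]; exact Real.rpow_lt_rpow (Real.rpow_nonneg hc0 _) hb1 hp
    linarith



noncomputable def Cc (p : ℝ) : ℕ → ℝ
  | 0 => 0
  | i+1 => Cc p i / 2 + ((1/2:ℝ)^i) ^ p

lemma exists_index {p k L : ℝ} (hp : 1 ≤ p) (hk : 0 < k) (hL0 : 0 ≤ L)
    (hL : L < (1 + 2 ^ (p - 3) * k / (2 ^ (p - 1) - 1)) ^ (1 / p)) :
    ∃ i : ℕ, 0 < Cc p i ∧ 8 * (L ^ p - 1) < k * (Cc p i * 2 ^ i) := by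
  have hp0 : (0:ℝ) < p := lt_of_lt_of_le one_pos hp
  have hC1 : Cc p 1 = 1 := by
    show (0:ℝ) / 2 + ((1/2:ℝ)^(0:ℕ)) ^ p = 1
    simp [Real.one_rpow]
  by_cases hL1 : L ≤ 1
  · refine ⟨1, by rw [hC1]; norm_num, ?_⟩
    have h1 : L ^ p ≤ 1 := Real.rpow_le_one hL0 hL1 hp0.le
    have h2 : (0:ℝ) < k * (Cc p 1 * 2 ^ 1) := by rw [hC1]; positivity
    linarith
  · push_neg at hL1
    have hp1 : 1 < p := by
      rcases eq_or_lt_of_le hp with h | h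
      · exfalso
        have hz : (2:ℝ) ^ (p - 1) - 1 = 0 := by
          rw [← h]; norm_num
        rw [hz, div_zero, add_zero, ← h, Real.one_rpow] at hL
        linarith
      · exact h
    set s : ℝ := 2 ^ ((1:ℝ) - p) with hs
    have hs0 : 0 < s := Real.rpow_pos_of_pos two_pos _
    have hs1 : s < 1 := Real.rpow_lt_one_of_one_lt_of_neg one_lt_two (by linarith)
    have he1 : (2:ℝ) ^ (p - 1) * s = 1 := by
      rw [hs, ← Real.rpow_add two_pos]
      norm_num
    have hden : (0:ℝ) < 2 ^ (p - 1) - 1 := by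
      have h2 : (1:ℝ) < 2 ^ (p - 1) :=
        Real.one_lt_rpow_iff_of_pos two_pos |>.2 (Or.inl ⟨one_lt_two, by linarith⟩)
      linarith
    have hB0 : (0:ℝ) ≤ 1 + 2 ^ (p - 3) * k / (2 ^ (p - 1) - 1) := by
      have h0 : (0:ℝ) ≤ 2 ^ (p - 3) := le_of_lt (Real.rpow_pos_of_pos two_pos _)
      have := div_nonneg (mul_nonneg h0 hk.le) hden.le
      linarith
    have hLp : L ^ p < 1 + 2 ^ (p - 3) * k / (2 ^ (p - 1) - 1) := by
      have h2 := Real.rpow_lt_rpow hL0 hL hp0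
      rwa [← Real.rpow_mul hB0, one_div, inv_mul_cancel₀ hp0.ne', Real.rpow_one] at h2
    set S : ℝ := 2 ^ (p - 3) * k / (2 ^ (p - 1) - 1) with hS
    have hS0 : 0 < S := div_pos (mul_pos (Real.rpow_pos_of_pos two_pos _) hk) hden
    have hLp1 : 0 < L ^ p - 1 := by
      have h1 : (1:ℝ) < L ^ p := Real.one_lt_rpow_iff_of_pos (lt_trans one_pos hL1) |>.2 (Or.inl ⟨hL1, hp0⟩)
      linarith
    set δ : ℝ := (S - (L ^ p - 1)) / S with hδ
    have hδ0 : 0 < δ := div_pos (by linarith) hS0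
    obtain ⟨i, hi⟩ := exists_pow_lt_of_lt_one hδ0 hs1
    have hi1 : 1 ≤ i := by
      rcases Nat.eq_zero_or_pos i with rfl | h
      · exfalso
        simp only [pow_zero] at hi
        have := (lt_div_iff₀ hS0).1 hi
        linarith
      · exact h
    have hform : ∀ j, Cc p j * 2 ^ j = 2 * ∑ t ∈ Finset.range j, s ^ t := by
      intro j; induction j with
      | zero => simp [Cc]
      | succ j ih =>
        have h2j : ((2:ℝ) ^ j) ≠ 0 := by positivity
        have hstep : ((1/2:ℝ)^j) ^ p = s ^ j / 2 ^ j := by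
          have q1 : ((1/2:ℝ)^j) = (2:ℝ) ^ (-(j:ℝ)) := by
            rw [Real.rpow_neg (by norm_num), Real.rpow_natCast]
            rw [one_div, inv_pow]
          have q2 : s ^ j = (2:ℝ) ^ (((1:ℝ) - p) * j) := by
            rw [hs, ← Real.rpow_natCast (2 ^ ((1:ℝ) - p)) j, ← Real.rpow_mul (by norm_num)]
          have q3 : ((2:ℝ):ℝ) ^ (j:ℕ) = (2:ℝ) ^ ((j:ℕ):ℝ) := (Real.rpow_natCast 2 j).symm
          rw [q1, ← Real.rpow_mul (by norm_num), q2, q3, ← Real.rpow_sub two_pos]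
          ring_nf
        rw [show Cc p (j+1) = Cc p j / 2 + ((1/2:ℝ)^j) ^ p from rfl, hstep]
        calc (Cc p j / 2 + s ^ j / 2 ^ j) * 2 ^ (j+1)
            = Cc p j * 2 ^ j + 2 * s ^ j := by rw [pow_succ]; field_simp
          _ = 2 * ∑ t ∈ Finset.range j, s ^ t + 2 * s ^ j := by rw [ih]
          _ = 2 * ∑ t ∈ Finset.range (j+1), s ^ t := by rw [Finset.sum_range_succ]; ring
    have hsum_pos : 0 < ∑ t ∈ Finset.range i, s ^ t :=
      Finset.sum_pos (fun t _ => pow_pos hs0 t) (Finset.nonempty_range_iff.2 (by omega))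
    have hCpos : 0 < Cc p i := by
      have h2i : (0:ℝ) < 2 ^ i := by positivity
      nlinarith [hform i]
    refine ⟨i, hCpos, ?_⟩
    rw [hform i]
    have hgeom : ∑ t ∈ Finset.range i, s ^ t = (1 - s ^ i) / (1 - s) := by
      rw [geom_sum_eq (ne_of_lt hs1)]
      rw [← neg_sub 1 (s ^ i), ← neg_sub 1 s, neg_div_neg_eq]
    rw [hgeom]
    have h1s : (0:ℝ) < 1 - s := by linarith
    have hkey : L ^ p - 1 < S * (1 - s ^ i) := by
      have h1 : S * s ^ i < S * δ := mul_lt_mul_of_pos_left hi hS0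
      have h2 : S * δ = S - (L ^ p - 1) := by rw [hδ]; field_simp
      nlinarith
    have hSeq : S = k / (4 * (1 - s)) := by
      have e2 : (2:ℝ) ^ (p - 3) * 4 = (2:ℝ) ^ (p - 1) := by
        have h4 : (4:ℝ) = 2 ^ (2:ℝ) := by
          rw [show (2:ℝ) = ((2:ℕ):ℝ) by norm_num, Real.rpow_natCast]; norm_num
        rw [h4, ← Real.rpow_add two_pos, show p - 3 + 2 = p - 1 by ring]
      have e3 : (2:ℝ) ^ (p - 1) - 1 = 2 ^ (p - 1) * (1 - s) := by
        rw [mul_sub, he1, mul_one]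
      have hne : ((2:ℝ) ^ (p - 1)) ≠ 0 := (Real.rpow_pos_of_pos two_pos _).ne'
      rw [hS, e3, show (2:ℝ) ^ (p - 3) = 2 ^ (p - 1) / 4 by rw [← e2]; ring]
      field_simp
    rw [hSeq] at hkey
    have heq : k * (2 * ((1 - s ^ i) / (1 - s))) = 8 * (k / (4 * (1 - s)) * (1 - s ^ i)) := by
      field_simp; ring
    rw [heq]
    linarith


variable {X : Type*} [MetricSpace X]

noncomputable def AA (T : X → X) (x z : X) : ℝ :=
  limsup (fun n => dist z (T^[n] x)) atTop

noncomputable def RR (T : X → X) (x : X) : ℝ := sInf (Set.range (AA T x))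

section
variable {T : X → X} {M p k L : ℝ}

lemma AA_nonneg (hM : ∀ a b : X, dist a b ≤ M) (x z : X) : 0 ≤ AA T x z :=
  ls_nonneg (fun _ => dist_nonneg) (fun n => hM _ _)

lemma AA_le_M (hM : ∀ a b : X, dist a b ≤ M) (x z : X) : AA T x z ≤ M :=
  ls_le (fun _ => dist_nonneg) (Eventually.of_forall fun n => hM _ _)

lemma AA_rpow (hp : 0 < p) (hM : ∀ a b : X, dist a b ≤ M) (x z : X) :
    limsup (fun n => dist z (T^[n] x) ^ p) atTop = AA T x z ^ p :=
  ls_rpow hp (fun _ => dist_nonneg) (fun n => hM _ _)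

lemma RR_le (hM : ∀ a b : X, dist a b ≤ M) (x z : X) : RR T x ≤ AA T x z :=
  csInf_le ⟨0, by rintro _ ⟨w, rfl⟩; exact AA_nonneg hM x w⟩ ⟨z, rfl⟩

lemma RR_nonneg [Nonempty X] (hM : ∀ a b : X, dist a b ≤ M) (x : X) : 0 ≤ RR T x :=
  le_csInf (Set.range_nonempty _) (by rintro _ ⟨w, rfl⟩; exact AA_nonneg hM x w)

lemma AA_lip (hM : ∀ a b : X, dist a b ≤ M) (x z w : X) :
    AA T x z ≤ AA T x w + dist z w := by
  refine ls_add (fun _ => dist_nonneg) (fun n => hM w _) (Eventually.of_forall fun n => ?_)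
  have := dist_triangle z w (T^[n] x)
  linarith

lemma AA_base (hM : ∀ a b : X, dist a b ≤ M)
    (hT : ∀ (n : ℕ) (a b : X), dist (T^[n] a) (T^[n] b) ≤ L * dist a b)
    (x y z : X) : AA T y z ≤ AA T x z + L * dist x y := by
  refine ls_add (fun _ => dist_nonneg) (fun n => hM z _) (Eventually.of_forall fun n => ?_)
  have h1 := dist_triangle z (T^[n] x) (T^[n] y)
  have h2 := hT n x y
  linarith

lemma AA_shift (hM : ∀ a b : X, dist a b ≤ M)
    (hT : ∀ (n : ℕ) (a b : X), dist (T^[n] a) (T^[n] b) ≤ L * dist a b)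
    (hL0 : 0 ≤ L) (x z : X) (m : ℕ) : AA T x (T^[m] z) ≤ L * AA T x z := by
  refine le_of_forall_pos_le_add fun ε hε => ?_
  set ε' := ε / (L + 1) with hε'def
  have hL1 : (0:ℝ) < L + 1 := by linarith
  have hε' : 0 < ε' := div_pos hε hL1
  have hev : ∀ᶠ n in atTop, dist z (T^[n] x) < AA T x z + ε' :=
    ls_lt_eventually (fun n => hM _ _) (lt_add_of_pos_right _ hε')
  obtain ⟨N, hN⟩ := eventually_atTop.1 hev
  have hev2 : ∀ᶠ n in atTop, dist (T^[m] z) (T^[n] x) ≤ L * (AA T x z + ε') := by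
    refine eventually_atTop.2 ⟨N + m, fun n hn => ?_⟩
    have h1 : T^[n] x = T^[m] (T^[n - m] x) := by
      rw [← Function.iterate_add_apply]
      congr 1
      omega
    rw [h1]
    calc dist (T^[m] z) (T^[m] (T^[n - m] x)) ≤ L * dist z (T^[n - m] x) := hT m z _
      _ ≤ L * (AA T x z + ε') :=
        mul_le_mul_of_nonneg_left (hN _ (by omega)).le hL0
  have hle : AA T x (T^[m] z) ≤ L * (AA T x z + ε') :=
    ls_le (fun _ => dist_nonneg) hev2
  have hLε : L * ε' ≤ ε := by
    have h1 : L * ε' ≤ (L + 1) * ε' := mul_le_mul_of_nonneg_right (by linarith) hε'.le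
    have h2 : (L + 1) * ε' = ε := by rw [hε'def]; field_simp
    linarith
  nlinarith

lemma AA_mid (hp : 0 < p) (hM : ∀ a b : X, dist a b ≤ M)
    (puc : ∀ x y z m : X,
      dist x m = dist x y / 2 → dist m y = dist x y / 2 →
      dist z m ^ p ≤ (1 / 2) * dist z x ^ p + (1 / 2) * dist z y ^ p
        - (k / 8) * dist x y ^ p)
    {z w m : X} (h1 : dist z m = dist z w / 2) (h2 : dist m w = dist z w / 2) (x : X) :
    AA T x m ^ p ≤ 1/2 * AA T x z ^ p + 1/2 * AA T x w ^ p - k/8 * dist z w ^ p := by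
  rw [← AA_rpow hp hM x m, ← AA_rpow hp hM x z, ← AA_rpow hp hM x w]
  have hMp : ∀ (a : X), ∀ n, dist a (T^[n] x) ^ p ≤ (max M 0) ^ p := fun a n =>
    Real.rpow_le_rpow dist_nonneg ((hM _ _).trans (le_max_left _ _)) hp.le
  have hcombo := ls_combo (u := fun n => dist m (T^[n] x) ^ p)
    (v := fun n => dist z (T^[n] x) ^ p) (w := fun n => dist w (T^[n] x) ^ p)
    (a := 1/2) (b := 1/2) (c := -(k/8 * dist z w ^ p))
    (by norm_num) (by norm_num)
    (fun n => Real.rpow_nonneg dist_nonneg p) (hMp z) (hMp w)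
    (Eventually.of_forall fun n => by
      have hpuc := puc z w (T^[n] x) m h1 h2
      rw [dist_comm (T^[n] x) m, dist_comm (T^[n] x) z, dist_comm (T^[n] x) w] at hpuc
      linarith)
  linarith

lemma exists_min [Nonempty X] [CompleteSpace X] (hp : 0 < p) (hk : 0 < k)
    (hM : ∀ a b : X, dist a b ≤ M)
    (geo : ∀ x y : X, ∃ m : X, dist x m = dist x y / 2 ∧ dist m y = dist x y / 2)
    (puc : ∀ x y z m : X,
      dist x m = dist x y / 2 → dist m y = dist x y / 2 →
      dist z m ^ p ≤ (1 / 2) * dist z x ^ p + (1 / 2) * dist z y ^ p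
        - (k / 8) * dist x y ^ p)
    (x : X) : ∃ c : X, AA T x c = RR T x := by
  have hR0 : 0 ≤ RR T x := RR_nonneg hM x
  set R : ℝ := RR T x with hR
  have hz : ∀ i : ℕ, ∃ z : X, AA T x z < R + 1/(i+1) := by
    intro i
    have hlt : sInf (Set.range (AA T x)) < R + 1/(i+1) := by
      have h0 : (0:ℝ) < 1/((i:ℝ)+1) := by positivity
      have : sInf (Set.range (AA T x)) = R := rfl
      rw [this]
      linarith
    obtain ⟨y, ⟨w, rfl⟩, hy⟩ := exists_lt_of_csInf_lt (Set.range_nonempty _) hlt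
    exact ⟨w, hy⟩
  choose z hzs using hz
  -- Cauchy estimate
  set g : ℕ → ℝ := fun i => (8/k) * (1/2 * (R + 1/(i+1)) ^ p - 1/2 * R ^ p) with hg
  have hdist : ∀ i j, dist (z i) (z j) ^ p ≤ g i + g j := by
    intro i j
    obtain ⟨m, hm1, hm2⟩ := geo (z i) (z j)
    have hmid := AA_mid (T := T) hp hM puc hm1 hm2 x
    have hRm : R ≤ AA T x m := RR_le hM x m
    have hRmp : R ^ p ≤ AA T x m ^ p :=
      Real.rpow_le_rpow hR0 hRm hp.le
    have hip : AA T x (z i) ^ p ≤ (R + 1/(i+1)) ^ p :=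
      Real.rpow_le_rpow (AA_nonneg hM x _) (hzs i).le hp.le
    have hjp : AA T x (z j) ^ p ≤ (R + 1/(j+1)) ^ p :=
      Real.rpow_le_rpow (AA_nonneg hM x _) (hzs j).le hp.le
    have hkadj : k/8 * dist (z i) (z j) ^ p ≤
        1/2 * (R + 1/(i+1)) ^ p + 1/2 * (R + 1/(j+1)) ^ p - R ^ p := by linarith
    have h8k : (0:ℝ) < 8/k := by positivity
    rw [hg]
    have := mul_le_mul_of_nonneg_left hkadj h8k.le
    calc dist (z i) (z j) ^ p = (8/k) * (k/8 * dist (z i) (z j) ^ p) := by field_simp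
      _ ≤ (8/k) * (1/2 * (R + 1/(i+1)) ^ p + 1/2 * (R + 1/(j+1)) ^ p - R ^ p) := this
      _ = (8/k) * (1/2 * (R + 1/(i+1)) ^ p - 1/2 * R ^ p)
          + (8/k) * (1/2 * (R + 1/(j+1)) ^ p - 1/2 * R ^ p) := by ring
  have hgto : Tendsto g atTop (𝓝 0) := by
    have h1 : Tendsto (fun i : ℕ => R + 1/(i+1)) atTop (𝓝 R) := by
      have : Tendsto (fun n : ℕ => 1 / ((n : ℝ) + 1)) atTop (𝓝 0) :=
        tendsto_one_div_add_atTop_nhds_zero_nat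
      have h2 := this.const_add R
      simpa using h2
    have h2 : Tendsto (fun i : ℕ => (R + 1/(i+1)) ^ p) atTop (𝓝 (R ^ p)) := by
      have hcont : ContinuousAt (fun t : ℝ => t ^ p) R :=
        Real.continuousAt_rpow_const R p (Or.inr hp.le)
      exact hcont.tendsto.comp h1
    have h3 : Tendsto g atTop (𝓝 ((8/k) * (1/2 * R ^ p - 1/2 * R ^ p))) := by
      apply Tendsto.const_mul
      exact (h2.const_mul _).sub tendsto_const_nhds
    simpa using h3
  have hcauchy : CauchySeq z := by
    rw [Metric.cauchySeq_iff]
    intro ε hε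
    have hεp : (0:ℝ) < ε ^ p / 2 := by
      have := Real.rpow_pos_of_pos hε p
      positivity
    have hev : ∀ᶠ i in atTop, g i < ε ^ p / 2 := hgto.eventually_lt_const hεp
    obtain ⟨N, hN⟩ := eventually_atTop.1 hev
    refine ⟨N, fun i hi j hj => ?_⟩
    have h1 : dist (z i) (z j) ^ p < ε ^ p := by
      have := hdist i j
      have gi := hN i hi
      have gj := hN j hj
      linarith
    by_contra hc
    push_neg at hc
    have := Real.rpow_le_rpow hε.le hc hp.le
    linarith
  obtain ⟨c, hc⟩ := cauchySeq_tendsto_of_complete hcauchy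
  refine ⟨c, le_antisymm ?_ (RR_le hM x c)⟩
  have hb : ∀ i : ℕ, AA T x c ≤ R + 1/((i:ℝ)+1) + dist (z i) c := by
    intro i
    have h1 := AA_lip (T := T) hM x c (z i)
    rw [dist_comm c (z i)] at h1
    have h2 := (hzs i).le
    linarith
  have hbto : Tendsto (fun i : ℕ => R + 1/(i+1) + dist (z i) c) atTop (𝓝 R) := by
    have h1 : Tendsto (fun i : ℕ => R + 1/(i+1)) atTop (𝓝 R) := by
      simpa using tendsto_one_div_add_atTop_nhds_zero_nat.const_add R
    have h2 : Tendsto (fun i => dist (z i) c) atTop (𝓝 (dist c c)) :=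
      hc.dist tendsto_const_nhds
    rw [dist_self] at h2
    simpa using h1.add h2
  exact ge_of_tendsto' hbto hb

lemma quality (hp : 0 < p) (hk : 0 < k) (hM : ∀ a b : X, dist a b ≤ M)
    (geo : ∀ x y : X, ∃ m : X, dist x m = dist x y / 2 ∧ dist m y = dist x y / 2)
    (puc : ∀ x y z m : X,
      dist x m = dist x y / 2 → dist m y = dist x y / 2 →
      dist z m ^ p ≤ (1 / 2) * dist z x ^ p + (1 / 2) * dist z y ^ p
        - (k / 8) * dist x y ^ p)
    {x c : X} (hc : AA T x c = RR T x) (z : X) :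
    k/8 * dist z c ^ p ≤ 1/2 * AA T x z ^ p - 1/2 * RR T x ^ p := by
  obtain ⟨m, hm1, hm2⟩ := geo z c
  have hmid := AA_mid (T := T) hp hM puc hm1 hm2 x
  have hRm : RR T x ≤ AA T x m := RR_le hM x m
  have hR0 : 0 ≤ RR T x := by
    rw [← hc]; exact AA_nonneg hM x c
  have hRmp : RR T x ^ p ≤ AA T x m ^ p := Real.rpow_le_rpow hR0 hRm hp.le
  rw [hc] at hmid
  linarith

end
end FPUL

/-- Fixed point theorem: in a nonempty bounded complete `p`-uniformly convex space with
parameter `k > 0`, every uniformly `L`-lipschitzian map with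
`L < (1 + 2^(p-3) * k / (2^(p-1) - 1))^(1/p)` has a fixed point. -/
theorem fixed_point_uniformly_lipschitzian
    {X : Type*} [MetricSpace X] [Nonempty X] [CompleteSpace X]
    (hXb : Bornology.IsBounded (Set.univ : Set X))
    (p k : ℝ) (hp : 1 ≤ p) (hk : 0 < k)
    (geo : ∀ x y : X, ∃ m : X, dist x m = dist x y / 2 ∧ dist m y = dist x y / 2)
    (puc : ∀ x y z m : X,
      dist x m = dist x y / 2 → dist m y = dist x y / 2 →
      dist z m ^ p ≤ (1 / 2) * dist z x ^ p + (1 / 2) * dist z y ^ p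
        - (k / 8) * dist x y ^ p)
    (T : X → X) (L : ℝ)
    (hL : L < (1 + 2 ^ (p - 3) * k / (2 ^ (p - 1) - 1)) ^ (1 / p))
    (hT : ∀ (n : ℕ) (x y : X), dist (T^[n] x) (T^[n] y) ≤ L * dist x y) :
    ∃ x : X, T x = x := by
  classical
  open Filter Topology FPUL in
  by_cases hX2 : ∃ a b : X, a ≠ b
  case neg =>
    push_neg at hX2
    exact ⟨Classical.arbitrary X, hX2 _ _⟩
  case pos =>
  obtain ⟨a0, b0, hab⟩ := hX2
  have hL0 : 0 ≤ L := by
    have hd : 0 < dist a0 b0 := dist_pos.2 hab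
    by_contra hneg; push_neg at hneg
    have h1 := hT 1 a0 b0
    nlinarith [dist_nonneg (x := T^[1] a0) (y := T^[1] b0)]
  have hp0 : (0:ℝ) < p := lt_of_lt_of_le one_pos hp
  obtain ⟨M, hM'⟩ := Metric.isBounded_iff.1 hXb
  have hM : ∀ a b : X, dist a b ≤ M := fun a b => hM' (Set.mem_univ a) (Set.mem_univ b)
  have hM0 : (0:ℝ) ≤ M := le_trans dist_nonneg (hM a0 a0)
  obtain ⟨i0, hCpos, hqlt⟩ := FPUL.exists_index hp hk hL0 hL
  set q : ℝ := 8 * (L ^ p - 1) / (k * (FPUL.Cc p i0 * 2 ^ i0)) with hq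
  have hden : (0:ℝ) < k * (FPUL.Cc p i0 * 2 ^ i0) :=
    mul_pos hk (mul_pos hCpos (by positivity))
  have hq1 : q < 1 := (div_lt_one hden).2 hqlt
  set θ : ℝ := (max q 0) ^ (1/p) with hθdef
  have hθ0 : 0 ≤ θ := Real.rpow_nonneg (le_max_right _ _) _
  have hθ1 : θ < 1 := Real.rpow_lt_one (le_max_right _ _) (max_lt hq1 one_pos) (by positivity)
  have hθp : θ ^ p = max q 0 := by
    rw [hθdef, ← Real.rpow_mul (le_max_right _ _), one_div, inv_mul_cancel₀ hp0.ne',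
      Real.rpow_one]
  -- KEY step: the minimizer moves orbit points by at most θ * radius
  have key : ∀ x c : X, FPUL.AA T x c = FPUL.RR T x →
      ∀ m : ℕ, dist c (T^[m] c) ≤ θ * FPUL.RR T x := by
    intro x c hc m
    have hRnn : 0 ≤ FPUL.RR T x := FPUL.RR_nonneg hM x
    rcases Nat.eq_zero_or_pos m with rfl | hm
    · simpa using mul_nonneg hθ0 hRnn
    set y : X := T^[m] c with hy
    set D : ℝ := dist c y with hD
    have hAy : FPUL.AA T x y ≤ L * FPUL.RR T x := by
      rw [hy, ← hc]
      exact FPUL.AA_shift (T := T) hM hT hL0 x c m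
    obtain ⟨w, hw0, hwrec⟩ : ∃ w : ℕ → X, w 0 = y ∧ ∀ i,
        dist c (w (i+1)) = dist c (w i) / 2 ∧ dist (w (i+1)) (w i) = dist c (w i) / 2 := by
      refine ⟨fun i => Nat.rec y (fun _ prev => Classical.choose (geo c prev)) i, rfl,
        fun i => ?_⟩
      exact Classical.choose_spec (geo c _)
    have hdc : ∀ i, dist c (w i) = (1/2:ℝ)^i * D := by
      intro i; induction i with
      | zero => rw [hw0, ← hD]; simp
      | succ i ih => rw [(hwrec i).1, ih]; ring
    have hchain : ∀ i, FPUL.AA T x (w i) ^ p ≤ (1 - (1/2:ℝ)^i) * FPUL.RR T x ^ p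
        + (1/2:ℝ)^i * FPUL.AA T x y ^ p - k/8 * (FPUL.Cc p i * D ^ p) := by
      intro i; induction i with
      | zero => simp [hw0, FPUL.Cc]
      | succ i ih =>
        have hmid := FPUL.AA_mid (T := T) hp0 hM puc (hwrec i).1 (hwrec i).2 x
        rw [hc] at hmid
        rw [hdc i, Real.mul_rpow (by positivity) dist_nonneg] at hmid
        have hCs : FPUL.Cc p (i+1) = FPUL.Cc p i / 2 + ((1/2:ℝ)^i) ^ p := rfl
        rw [hCs, pow_succ]
        linarith
    have h1p : FPUL.RR T x ^ p ≤ FPUL.AA T x (w i0) ^ p :=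
      Real.rpow_le_rpow hRnn (FPUL.RR_le hM x (w i0)) hp0.le
    have h2p : FPUL.AA T x y ^ p ≤ L ^ p * FPUL.RR T x ^ p := by
      have h := Real.rpow_le_rpow (FPUL.AA_nonneg (T := T) hM x y) hAy hp0.le
      rwa [Real.mul_rpow hL0 hRnn] at h
    have hci := hchain i0
    have ht0 : (0:ℝ) ≤ (1/2:ℝ)^i0 := by positivity
    have h3 : (1/2:ℝ)^i0 * FPUL.AA T x y ^ p ≤ (1/2:ℝ)^i0 * (L ^ p * FPUL.RR T x ^ p) :=
      mul_le_mul_of_nonneg_left h2p ht0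
    have h4 : k/8 * (FPUL.Cc p i0 * D ^ p)
        ≤ (1/2:ℝ)^i0 * ((L ^ p - 1) * FPUL.RR T x ^ p) := by nlinarith
    have hDp : D ^ p ≤ max q 0 * FPUL.RR T x ^ p := by
      have hkC : (0:ℝ) < k/8 * FPUL.Cc p i0 := mul_pos (by positivity) hCpos
      have h5 : D ^ p ≤ ((1/2:ℝ)^i0 * ((L ^ p - 1) * FPUL.RR T x ^ p)) / (k/8 * FPUL.Cc p i0) := by
        rw [le_div_iff₀ hkC]
        nlinarith
      have hhalf : ((1/2:ℝ)^i0) = ((2:ℝ)^i0)⁻¹ := by rw [one_div, inv_pow]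
      have h6 : ((1/2:ℝ)^i0 * ((L ^ p - 1) * FPUL.RR T x ^ p)) / (k/8 * FPUL.Cc p i0)
          = q * FPUL.RR T x ^ p := by
        rw [hhalf, hq]
        have h2i : ((2:ℝ)^i0) ≠ 0 := by positivity
        field_simp
      calc D ^ p ≤ _ := h5
        _ = q * FPUL.RR T x ^ p := h6
        _ ≤ max q 0 * FPUL.RR T x ^ p :=
          mul_le_mul_of_nonneg_right (le_max_left _ _) (Real.rpow_nonneg hRnn _)
    have hfin : D ^ p ≤ (θ * FPUL.RR T x) ^ p := by
      rw [Real.mul_rpow hθ0 hRnn, hθp]; exact hDp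
    exact FPUL.rpow_le_rpow_rev dist_nonneg (mul_nonneg hθ0 hRnn) hp0 hfin
  -- iteration of minimizers
  have hmin : ∀ x : X, ∃ c : X, FPUL.AA T x c = FPUL.RR T x := fun x =>
    FPUL.exists_min (T := T) hp0 hk hM geo puc x
  choose step hstep using hmin
  set xs : ℕ → X := fun j => step^[j] (Classical.arbitrary X) with hxs
  have hxs_succ : ∀ j, xs (j+1) = step (xs j) := fun j =>
    Function.iterate_succ_apply' step j _
  have hAAself : ∀ j, FPUL.AA T (xs (j+1)) (xs (j+1)) ≤ θ * FPUL.RR T (xs j) := by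
    intro j
    rw [hxs_succ j]
    show Filter.limsup (fun n => dist (step (xs j)) (T^[n] (step (xs j)))) Filter.atTop
      ≤ θ * FPUL.RR T (xs j)
    exact FPUL.ls_le (fun _ => dist_nonneg) (Filter.Eventually.of_forall fun m =>
      key (xs j) (step (xs j)) (hstep (xs j)) m)
  have hRRθ : ∀ j, FPUL.RR T (xs (j+1)) ≤ θ * FPUL.RR T (xs j) := fun j =>
    le_trans (FPUL.RR_le hM _ _) (hAAself j)
  have hRRj : ∀ j, FPUL.RR T (xs j) ≤ θ ^ j * M := by
    intro j; induction j with
    | zero => simpa using (FPUL.RR_le hM (xs 0) (xs 0)).trans (FPUL.AA_le_M hM _ _)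
    | succ j ih =>
      have h1 := hRRθ j
      have h2 := mul_le_mul_of_nonneg_left ih hθ0
      rw [pow_succ]
      nlinarith
  have hquality : ∀ x : X, dist x (step x) ≤ (4/k) ^ ((1:ℝ)/p) * FPUL.AA T x x := by
    intro x
    have hq1' := FPUL.quality (T := T) hp0 hk hM geo puc (hstep x) x
    have hRp : 0 ≤ FPUL.RR T x ^ p := Real.rpow_nonneg (FPUL.RR_nonneg hM x) p
    have hA0 : 0 ≤ FPUL.AA T x x := FPUL.AA_nonneg (T := T) hM x x
    have h4k : (0:ℝ) ≤ 4/k := by positivity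
    have h2 : dist x (step x) ^ p ≤ (4/k) * FPUL.AA T x x ^ p := by
      have h8k : (0:ℝ) ≤ 8/k := by positivity
      have := mul_le_mul_of_nonneg_left hq1' h8k
      have heq : (8/k) * (k/8 * dist x (step x) ^ p) = dist x (step x) ^ p := by
        field_simp
      rw [heq] at this
      have hR4 : 0 ≤ (4/k) * FPUL.RR T x ^ p := mul_nonneg h4k hRp
      have hexp : (8/k) * (1/2 * FPUL.AA T x x ^ p - 1/2 * FPUL.RR T x ^ p)
          = (4/k) * FPUL.AA T x x ^ p - (4/k) * FPUL.RR T x ^ p := by ring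
      rw [hexp] at this
      linarith
    have h3 : dist x (step x) ^ p ≤ ((4/k) ^ ((1:ℝ)/p) * FPUL.AA T x x) ^ p := by
      rw [Real.mul_rpow (Real.rpow_nonneg h4k _) hA0,
        ← Real.rpow_mul h4k, one_div, inv_mul_cancel₀ hp0.ne', Real.rpow_one]
      exact h2
    exact FPUL.rpow_le_rpow_rev dist_nonneg
      (mul_nonneg (Real.rpow_nonneg h4k _) hA0) hp0 h3
  set K : ℝ := (4/k) ^ ((1:ℝ)/p) with hK
  have hK0 : 0 ≤ K := Real.rpow_nonneg (by positivity) _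
  have hAAj : ∀ j, FPUL.AA T (xs j) (xs j) ≤ θ ^ j * M := by
    intro j; cases j with
    | zero => simpa using FPUL.AA_le_M (T := T) hM (xs 0) (xs 0)
    | succ j =>
      have h1 := hAAself j
      have h2 := mul_le_mul_of_nonneg_left (hRRj j) hθ0
      rw [pow_succ]
      nlinarith
  have hd : ∀ j, dist (xs j) (xs (j+1)) ≤ (K * M) * θ ^ j := by
    intro j
    have h1 : dist (xs j) (xs (j+1)) ≤ K * FPUL.AA T (xs j) (xs j) := by
      rw [hxs_succ j]; exact hquality (xs j)
    have h2 := mul_le_mul_of_nonneg_left (hAAj j) hK0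
    calc dist (xs j) (xs (j+1)) ≤ K * (θ^j * M) := h1.trans h2
      _ = (K*M) * θ^j := by ring
  have hcauchy : CauchySeq xs := cauchySeq_of_le_geometric θ (K*M) hθ1 hd
  obtain ⟨xst, hxst⟩ := cauchySeq_tendsto_of_complete hcauchy
  have hRRxst : FPUL.RR T xst = 0 := by
    have hub : ∀ j, FPUL.RR T xst ≤ θ^j * M + L * dist (xs j) xst := by
      intro j
      have h1 : FPUL.RR T xst ≤ FPUL.AA T xst (xs (j+1)) := FPUL.RR_le hM xst (xs (j+1))
      have h2 : FPUL.AA T xst (xs (j+1)) ≤ FPUL.AA T (xs j) (xs (j+1)) + L * dist (xs j) xst :=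
        FPUL.AA_base (T := T) hM hT (xs j) xst (xs (j+1))
      have h3 : FPUL.AA T (xs j) (xs (j+1)) = FPUL.RR T (xs j) := by
        rw [hxs_succ j]; exact hstep (xs j)
      have h4 := hRRj j
      linarith
    have hto : Filter.Tendsto (fun j : ℕ => θ^j * M + L * dist (xs j) xst)
        Filter.atTop (nhds 0) := by
      have h1 : Filter.Tendsto (fun j : ℕ => θ^j * M) Filter.atTop (nhds 0) := by
        simpa using (tendsto_pow_atTop_nhds_zero_of_lt_one hθ0 hθ1).mul_const M
      have h2 : Filter.Tendsto (fun j => dist (xs j) xst) Filter.atTop (nhds (dist xst xst)) :=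
        hxst.dist tendsto_const_nhds
      rw [dist_self] at h2
      have h3 := h2.const_mul L
      simpa using h1.add h3
    exact le_antisymm (ge_of_tendsto' hto hub) (FPUL.RR_nonneg hM xst)
  have hAA0 : FPUL.AA T xst (step xst) = 0 := by rw [hstep xst, hRRxst]
  have htend : Filter.Tendsto (fun n => T^[n] xst) Filter.atTop (nhds (step xst)) := by
    rw [Metric.tendsto_atTop]
    intro ε hε
    have hev : ∀ᶠ n in Filter.atTop, dist (step xst) (T^[n] xst) < ε := by
      apply FPUL.ls_lt_eventually (fun n => hM _ _)
      rw [show Filter.limsup (fun n => dist (step xst) (T^[n] xst)) Filter.atTop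
        = FPUL.AA T xst (step xst) from rfl, hAA0]
      exact hε
    obtain ⟨N, hN⟩ := Filter.eventually_atTop.1 hev
    exact ⟨N, fun n hn => by rw [dist_comm]; exact hN n hn⟩
  refine ⟨step xst, ?_⟩
  have hbnd : ∀ n : ℕ, dist (T^[n+1] xst) (T (step xst)) ≤ L * dist (T^[n] xst) (step xst) := by
    intro n
    have h := hT 1 (T^[n] xst) (step xst)
    rw [Function.iterate_one] at h
    rw [Function.iterate_succ_apply']
    exact h
  have hdto : Filter.Tendsto (fun n => dist (T^[n] xst) (step xst)) Filter.atTop (nhds 0) := by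
    have h : Filter.Tendsto (fun n => dist (T^[n] xst) (step xst)) Filter.atTop
        (nhds (dist (step xst) (step xst))) := htend.dist tendsto_const_nhds
    rw [dist_self] at h
    exact h
  have hzero : Filter.Tendsto (fun n => dist (T^[n+1] xst) (T (step xst)))
      Filter.atTop (nhds 0) := by
    have hLd := hdto.const_mul L
    rw [mul_zero] at hLd
    exact squeeze_zero (fun n => dist_nonneg) hbnd hLd
  have h1 : Filter.Tendsto (fun n => T^[n+1] xst) Filter.atTop (nhds (T (step xst))) :=
    tendsto_iff_dist_tendsto_zero.2 hzero
  have h2 : Filter.Tendsto (fun n => T^[n+1] xst) Filter.atTop (nhds (step xst)) :=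
    htend.comp (Filter.tendsto_add_atTop_nat 1)
  exact tendsto_nhds_unique h1 h2
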